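/- For any 2N-periodic sequence v with zero mean over one period, the discrete Poincaré inequality holds: the l^2 norm of v is bounded by h/(2 sin(πh/2)) times the l^2 norm of its backward difference quotient Dv, where h = 1/N. -/

import Mathlib

open Finset Complex

namespace DP

lemma sum_Ico_int {M : Type*} [AddCommMonoid M] (n : ℕ) (f : ℤ → M) :
    ∑ j ∈ Finset.Ico (0:ℤ) n, f j = ∑ j ∈ Finset.range n, f j := by
  induction n with
  | zero => simp
  | succ m ih =>
    rw [Finset.sum_range_succ, ← ih,
      show Finset.Ico (0:ℤ) (m+1:ℕ) = insert (m:ℤ) (Finset.Ico (0:ℤ) m) by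
        ext x; simp,
      Finset.sum_insert (by simp)]
    exact add_comm _ _

lemma periodic_shift {M : Type*} [AddCommMonoid M] (n : ℕ) (f : ℤ → M)
    (hf : ∀ j, f (j + n) = f j) (a : ℤ) :
    ∑ j ∈ Finset.Ico a (a + n), f j = ∑ j ∈ Finset.Ico (0:ℤ) n, f j := by
  rcases Nat.eq_zero_or_pos n with h0 | h0
  · simp [h0]
  have step : ∀ b : ℤ, ∑ j ∈ Finset.Ico (b+1) (b+1+n), f j = ∑ j ∈ Finset.Ico b (b+n), f j := by
    intro b
    have h1 : Finset.Ico (b+1) (b+1+(n:ℤ)) = insert (b+n) (Finset.Ico (b+1) (b+n)) := by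
      ext x; simp; omega
    have h2 : Finset.Ico b (b+(n:ℤ)) = insert b (Finset.Ico (b+1) (b+n)) := by
      ext x; simp; omega
    rw [h1, h2, Finset.sum_insert (by simp), Finset.sum_insert (by simp), hf b]
  induction a using Int.induction_on with
  | zero => rw [zero_add]
  | succ i ih => rw [show ((i:ℤ)+1) = (i:ℤ)+1 from rfl, step i, ih]
  | pred i ih =>
    have := step (-(i:ℤ)-1)
    rw [show (-(i:ℤ)-1+1) = -(i:ℤ) by ring] at this
    rw [← ih, ← this]

noncomputable def e (n : ℕ) (m : ℤ) : ℂ := Complex.exp (2 * Real.pi * Complex.I * m / n)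

lemma e_add (n : ℕ) (a b : ℤ) : e n (a + b) = e n a * e n b := by
  rw [e, e, e, ← Complex.exp_add]
  congr 1
  push_cast
  ring

lemma e_zero (n : ℕ) : e n 0 = 1 := by simp [e]

lemma e_conj (n : ℕ) (m : ℤ) : (starRingEnd ℂ) (e n m) = e n (-m) := by
  rw [e, e, ← Complex.exp_conj]
  congr 1
  simp only [map_div₀, map_mul, Complex.conj_I, map_ofNat, Complex.conj_ofReal,
    map_intCast, map_natCast]
  push_cast
  ring

lemma e_pow (n : ℕ) (m : ℤ) (k : ℕ) : e n (m * k) = (e n m) ^ k := by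
  induction k with
  | zero => simp [e_zero]
  | succ j ih =>
    push_cast
    rw [show m * ((j:ℤ)+1) = m * j + m by ring, e_add, ih, pow_succ]

lemma e_eq_one_iff (n : ℕ) (hn : 0 < n) (m : ℤ) : e n m = 1 ↔ (n:ℤ) ∣ m := by
  rw [e, Complex.exp_eq_one_iff]
  have hπ : (Real.pi : ℂ) ≠ 0 := by exact_mod_cast Real.pi_ne_zero
  have hI : (Complex.I : ℂ) ≠ 0 := Complex.I_ne_zero
  have hnc : (n:ℂ) ≠ 0 := by exact_mod_cast hn.ne'
  constructor
  · rintro ⟨k, hk⟩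
    refine ⟨k, ?_⟩
    rw [mul_div_assoc] at hk
    have h2 : (2 * (Real.pi:ℂ) * Complex.I) * ((m:ℂ)/n) = (2 * (Real.pi:ℂ) * Complex.I) * k := by
      rw [hk]; ring
    have h3 : (m:ℂ)/n = k := mul_left_cancel₀ (by simp [hπ, hI]) h2
    have h4 : (m:ℂ) = k * n := (div_eq_iff hnc).1 h3
    have h5 : m = k * n := by exact_mod_cast h4
    rw [h5]; ring
  · rintro ⟨k, hk⟩
    refine ⟨k, ?_⟩
    rw [hk]
    push_cast
    field_simp

lemma e_periodic (n : ℕ) (hn : 0 < n) (m : ℤ) : e n (m + n) = e n m := by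
  rw [e_add, (e_eq_one_iff n hn n).2 ⟨1, by ring⟩, mul_one]

lemma ortho (n : ℕ) (hn : 0 < n) (m : ℤ) :
    ∑ k ∈ Finset.range n, e n (m * k) = if (n:ℤ) ∣ m then (n:ℂ) else 0 := by
  by_cases hd : (n:ℤ) ∣ m
  · simp only [hd, if_true]
    have : ∀ k ∈ Finset.range n, e n (m * k) = 1 := by
      intro k _
      rcases hd with ⟨c, hc⟩
      exact (e_eq_one_iff n hn _).2 ⟨c * k, by rw [hc]; ring⟩
    rw [Finset.sum_congr rfl this]
    simp
  · simp only [hd, if_false]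
    have hne : e n m ≠ 1 := fun h => hd ((e_eq_one_iff n hn m).1 h)
    have : ∀ k ∈ Finset.range n, e n (m * k) = (e n m)^k := fun k _ => e_pow n m k
    rw [Finset.sum_congr rfl this, geom_sum_eq hne]
    have : (e n m) ^ n = 1 := by
      rw [← e_pow]
      exact (e_eq_one_iff n hn _).2 ⟨m, by ring⟩
    rw [this, sub_self, zero_div]

noncomputable def F (n : ℕ) (V : ℤ → ℂ) (k : ℤ) : ℂ :=
  ∑ j ∈ Finset.Ico (0:ℤ) n, e n (-(j*k)) * V j

lemma parseval_c (n : ℕ) (hn : 0 < n) (V : ℤ → ℂ) :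
    ∑ k ∈ Finset.Ico (0:ℤ) n, F n V k * (starRingEnd ℂ) (F n V k)
      = n * ∑ j ∈ Finset.Ico (0:ℤ) n, V j * (starRingEnd ℂ) (V j) := by
  have expand : ∀ k : ℤ, F n V k * (starRingEnd ℂ) (F n V k)
      = ∑ j ∈ Finset.Ico (0:ℤ) n, ∑ l ∈ Finset.Ico (0:ℤ) n,
          (V j * (starRingEnd ℂ) (V l)) * e n ((l - j)*k) := by
    intro k
    rw [F, map_sum, Finset.sum_mul_sum]
    refine Finset.sum_congr rfl fun j _ => Finset.sum_congr rfl fun l _ => ?_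
    rw [map_mul, e_conj, neg_neg,
      show ((l:ℤ) - j) * k = -(j*k) + l*k by ring, e_add]
    ring
  simp_rw [expand]
  rw [Finset.sum_comm]
  have inner : ∀ j ∈ Finset.Ico (0:ℤ) n,
      (∑ k ∈ Finset.Ico (0:ℤ) n, ∑ l ∈ Finset.Ico (0:ℤ) n,
        (V j * (starRingEnd ℂ) (V l)) * e n ((l - j)*k))
      = (n:ℂ) * (V j * (starRingEnd ℂ) (V j)) := by
    intro j hj
    rw [Finset.sum_comm]
    have hsum : ∀ l ∈ Finset.Ico (0:ℤ) n,
        (∑ k ∈ Finset.Ico (0:ℤ) n, (V j * (starRingEnd ℂ) (V l)) * e n ((l - j)*k))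
        = (V j * (starRingEnd ℂ) (V l)) * (if l = j then (n:ℂ) else 0) := by
      intro l hl
      rw [← Finset.mul_sum]
      congr 1
      rw [sum_Ico_int n (fun k => e n ((l - j)*k)), ortho n hn]
      simp only [Finset.mem_Ico] at hj hl
      by_cases hlj : l = j
      · simp [hlj]
      · have hn' : (0:ℤ) < n := by exact_mod_cast hn
        have : ¬ ((n:ℤ) ∣ (l - j)) := by
          rintro ⟨c, hc⟩
          have hc1 : c < 1 := by nlinarith [hj.1, hj.2, hl.1, hl.2]
          have hc2 : -1 < c := by nlinarith [hj.1, hj.2, hl.1, hl.2]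
          have hc0 : c = 0 := by omega
          rw [hc0, mul_zero] at hc
          exact hlj (by omega)
        simp [this, hlj]
    rw [Finset.sum_congr rfl hsum]
    simp only [mul_ite, mul_zero]
    rw [Finset.sum_ite_eq' (Finset.Ico (0:ℤ) n) j, if_pos hj]
    ring
  rw [Finset.sum_congr rfl inner, ← Finset.mul_sum]

lemma parseval (n : ℕ) (hn : 0 < n) (V : ℤ → ℂ) :
    ∑ k ∈ Finset.Ico (0:ℤ) n, Complex.normSq (F n V k)
      = n * ∑ j ∈ Finset.Ico (0:ℤ) n, Complex.normSq (V j) := by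
  have h := parseval_c n hn V
  simp_rw [Complex.mul_conj] at h
  exact_mod_cast h

lemma F_shift (n : ℕ) (hn : 0 < n) (V : ℤ → ℂ) (hper : ∀ j, V (j + n) = V j) (k : ℤ) :
    ∑ j ∈ Finset.Ico (0:ℤ) n, e n (-(j*k)) * V (j - 1) = e n (-k) * F n V k := by
  set g : ℤ → ℂ := fun i => e n (-((i+1)*k)) * V i with hg
  have hgper : ∀ i, g (i + n) = g i := by
    intro i
    simp only [hg]
    have he : e n (-((i + (n:ℤ) + 1) * k)) = e n (-((i+1)*k)) := by
      rw [show -((i + (n:ℤ) + 1) * k) = -((i+1)*k) + (n:ℤ)*(-k) by ring, e_add,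
        (e_eq_one_iff n hn ((n:ℤ)*(-k))).2 ⟨-k, rfl⟩, mul_one]
    rw [hper i, he]
  have step1 : ∑ j ∈ Finset.Ico (0:ℤ) n, e n (-(j*k)) * V (j - 1)
      = ∑ j ∈ Finset.Ico (0:ℤ) n, g (j - 1) := by
    refine Finset.sum_congr rfl fun j _ => ?_
    simp only [hg]
    rw [show (j - 1 + 1 : ℤ) = j by ring]
  have step2 : ∑ j ∈ Finset.Ico (0:ℤ) n, g (j - 1)
      = ∑ i ∈ Finset.Ico (-1 : ℤ) (-1 + n), g i := by
    rw [show Finset.Ico (-1:ℤ) (-1 + n) = (Finset.Ico (0:ℤ) n).map (addRightEmbedding (-1)) by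
      rw [Finset.map_add_right_Ico]; congr 1 <;> ring, Finset.sum_map]
    refine Finset.sum_congr rfl fun j _ => ?_
    simp [addRightEmbedding, sub_eq_add_neg]
  rw [step1, step2, periodic_shift n g hgper (-1), F, Finset.mul_sum]
  refine Finset.sum_congr rfl fun i _ => ?_
  simp only [hg]
  rw [show (-((i+1)*k)) = -k + -(i*k) by ring, e_add]
  ring

lemma normSq_one_sub_e (n : ℕ) (hn : 0 < n) (m : ℤ) :
    Complex.normSq (1 - e n (-m)) = 4 * Real.sin (Real.pi * m / n)^2 := by
  have hnc : (n:ℂ) ≠ 0 := by exact_mod_cast hn.ne'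
  set θ : ℝ := -(2 * Real.pi * m / n) with hθ
  have harg : e n (-m) = Complex.exp ((θ:ℂ) * Complex.I) := by
    rw [e]
    congr 1
    rw [hθ]
    push_cast
    field_simp
  have hre : (1 - e n (-m)).re = 1 - Real.cos θ := by
    rw [harg]; simp [Complex.exp_ofReal_mul_I_re]
  have him : (1 - e n (-m)).im = - Real.sin θ := by
    rw [harg]; simp [Complex.exp_ofReal_mul_I_im]
  rw [Complex.normSq_apply, hre, him]
  have hy : θ = 2 * (-(Real.pi * m / n)) := by rw [hθ]; ring
  set y : ℝ := -(Real.pi * m / n) with hyy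
  rw [hy, Real.cos_two_mul, Real.sin_two_mul]
  have hpyth := Real.sin_sq_add_cos_sq y
  have hsin : Real.sin (Real.pi * m / n) = - Real.sin y := by rw [hyy, Real.sin_neg]; ring
  rw [hsin]
  nlinarith [hpyth]

lemma sin_ge (n : ℕ) (hn : 2 ≤ n) (m : ℤ) (h1 : 1 ≤ m) (h2 : m ≤ (n:ℤ) - 1) :
    Real.sin (Real.pi / n) ≤ Real.sin (Real.pi * m / n) := by
  have hπ := Real.pi_pos
  have hn0 : (0:ℝ) < n := by exact_mod_cast (show 0 < n by omega)
  have hn2 : (2:ℝ) ≤ n := by exact_mod_cast hn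
  have hbase : 0 < Real.pi / n := by positivity
  have hbase2 : Real.pi / n ≤ Real.pi / 2 :=
    div_le_div_of_nonneg_left hπ.le (by norm_num) hn2
  have claim : ∀ y : ℝ, Real.pi / n ≤ y → y ≤ Real.pi / 2 → Real.sin (Real.pi / n) ≤ Real.sin y := by
    intro y hy1 hy2
    apply Real.strictMonoOn_sin.monotoneOn ?_ ?_ hy1
    · constructor <;> [linarith; linarith]
    · constructor <;> [linarith; linarith]
  have hm1 : (1:ℝ) ≤ (m:ℝ) := by exact_mod_cast h1
  have hm2 : (m:ℝ) ≤ (n:ℝ) - 1 := by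
    have : (m:ℝ) ≤ ((n:ℤ) - 1 : ℤ) := by exact_mod_cast h2
    push_cast at this; linarith
  have hlow : Real.pi / n ≤ Real.pi * m / n := by
    apply div_le_div_of_nonneg_right ?_ hn0.le
    nlinarith
  rcases le_or_gt (Real.pi * m / n) (Real.pi / 2) with hc | hc
  · exact claim _ hlow hc
  · conv_rhs => rw [← Real.sin_pi_sub]
    apply claim
    · rw [le_sub_iff_add_le, ← add_div, div_le_iff₀ hn0]
      nlinarith
    · linarith

lemma spectral (n : ℕ) (hn : 2 ≤ n) (V : ℤ → ℂ) (hper : ∀ j, V (j + n) = V j)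
    (hmean : ∑ j ∈ Finset.Ico (0:ℤ) n, V j = 0) :
    4 * Real.sin (Real.pi / n)^2 * ∑ j ∈ Finset.Ico (0:ℤ) n, Complex.normSq (V j)
      ≤ ∑ j ∈ Finset.Ico (0:ℤ) n, Complex.normSq (V j - V (j - 1)) := by
  have hn0 : 0 < n := by omega
  set D : ℤ → ℂ := fun j => V j - V (j-1) with hD
  have FD : ∀ k : ℤ, F n D k = (1 - e n (-k)) * F n V k := by
    intro k
    rw [F]
    have hsplit : ∀ j ∈ Finset.Ico (0:ℤ) n,
        e n (-(j*k)) * D j = e n (-(j*k)) * V j - e n (-(j*k)) * V (j-1) := by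
      intro j _; simp only [hD]; ring
    rw [Finset.sum_congr rfl hsplit, Finset.sum_sub_distrib, F_shift n hn0 V hper k]
    rw [F]
    ring
  have F0 : F n V 0 = 0 := by
    rw [F]
    have h1 : ∀ j ∈ Finset.Ico (0:ℤ) n, e n (-(j*0)) * V j = V j := by
      intro j _; rw [mul_zero, neg_zero, e_zero, one_mul]
    rw [Finset.sum_congr rfl h1, hmean]
  have key : ∀ k ∈ Finset.Ico (0:ℤ) n,
      4 * Real.sin (Real.pi / n)^2 * Complex.normSq (F n V k) ≤ Complex.normSq (F n D k) := by
    intro k hk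
    rw [FD k, Complex.normSq_mul, normSq_one_sub_e n hn0 k]
    rcases eq_or_ne k 0 with rfl | hk0
    · rw [F0]; simp
    · have hk' := Finset.mem_Ico.1 hk
      have hmono := sin_ge n hn k (by omega) (by omega)
      have hs0 : 0 ≤ Real.sin (Real.pi / n) := by
        apply Real.sin_nonneg_of_nonneg_of_le_pi (by positivity)
        apply div_le_self Real.pi_pos.le
        exact_mod_cast (by omega : 1 ≤ n)
      have hsq : Real.sin (Real.pi/n)^2 ≤ Real.sin (Real.pi * k / n)^2 :=
        pow_le_pow_left₀ hs0 hmono 2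
      nlinarith [Complex.normSq_nonneg (F n V k)]
  have sum_key := Finset.sum_le_sum key
  rw [parseval n hn0 D, ← Finset.mul_sum, parseval n hn0 V] at sum_key
  have hnR : (0:ℝ) < n := by exact_mod_cast hn0
  rw [show 4 * Real.sin (Real.pi / n)^2 * ((n:ℝ) * ∑ j ∈ Finset.Ico (0:ℤ) n, Complex.normSq (V j))
      = (n:ℝ) * (4 * Real.sin (Real.pi / n)^2 * ∑ j ∈ Finset.Ico (0:ℤ) n, Complex.normSq (V j))
      by ring] at sum_key
  exact le_of_mul_le_mul_left sum_key hnR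

end DP

/-- Discrete Poincaré inequality for mean-zero 2N-periodic sequences:
`‖v‖_{l²} ≤ (h/(2 sin(πh/2))) ‖Dv‖_{l²}` with `h = 1/N`. -/
theorem discrete_poincare (N : ℤ) (hN : 1 ≤ N) (h : ℝ) (hh : h = 1 / (N : ℝ))
    (v : ℤ → ℝ) (hper : ∀ j : ℤ, v (j + 2 * N) = v j)
    (hmean : ∑ j ∈ Finset.Icc (-N + 1) N, v j = 0) :
    Real.sqrt (h * ∑ j ∈ Finset.Icc (-N + 1) N, (v j) ^ 2) ≤
      (h / (2 * Real.sin (Real.pi * h / 2))) *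
        Real.sqrt (h * ∑ j ∈ Finset.Icc (-N + 1) N, ((v j - v (j - 1)) / h) ^ 2) := by
  set n : ℕ := (2 * N).toNat with hn_def
  have hn2 : 2 ≤ n := by omega
  have hnZ : (n:ℤ) = 2 * N := by omega
  have hNR : (0:ℝ) < (N:ℝ) := by exact_mod_cast hN
  have hnR : (n:ℝ) = 2 * (N:ℝ) := by exact_mod_cast congrArg (Int.cast : ℤ → ℝ) hnZ
  have hpv : ∀ j, v (j + n) = v j := fun j => by rw [hnZ]; exact hper j
  have window : ∀ (f : ℤ → ℝ), (∀ j, f (j + n) = f j) →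
      ∑ j ∈ Finset.Icc (-N+1) N, f j = ∑ j ∈ Finset.Ico (0:ℤ) n, f j := by
    intro f hf
    rw [show Finset.Icc (-N+1) N = Finset.Ico (-N+1) (-N+1 + n) by
      ext x; simp [Finset.mem_Icc, Finset.mem_Ico]; omega]
    exact DP.periodic_shift n f hf _
  have hpv2 : ∀ j, (fun i => (v i)^2) (j + n) = (fun i => (v i)^2) j := fun j => by
    simp only; rw [hpv]
  have hpd : ∀ j, (fun i => ((v i - v (i-1))/h)^2) (j + n) = (fun i => ((v i - v (i-1))/h)^2) j := by
    intro j
    simp only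
    rw [hpv j, show j + (n:ℤ) - 1 = (j - 1) + n by ring, hpv (j-1)]
  set V : ℤ → ℂ := fun j => (v j : ℂ) with hV
  have hperV : ∀ j, V (j + n) = V j := fun j => by simp only [hV]; rw [hpv]
  have hmean' : ∑ j ∈ Finset.Ico (0:ℤ) n, V j = 0 := by
    have hw := window v hpv
    rw [hmean] at hw
    simp only [hV]
    rw [← Complex.ofReal_sum, ← hw]
    simp
  have spec := DP.spectral n hn2 V hperV hmean'
  have hVsq : ∀ j, Complex.normSq (V j) = (v j)^2 := by
    intro j; simp only [hV]; rw [Complex.normSq_ofReal]; ring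
  have hVd : ∀ j : ℤ, Complex.normSq (V j - V (j-1)) = (v j - v (j-1))^2 := by
    intro j
    simp only [hV]
    rw [← Complex.ofReal_sub, Complex.normSq_ofReal]
    ring
  simp_rw [hVsq, hVd] at spec
  -- spec : 4 * sin(π/n)^2 * ∑_{Ico} (v j)^2 ≤ ∑_{Ico} (v j - v (j-1))^2
  set s : ℝ := Real.sin (Real.pi * h / 2) with hs
  have hN1 : (1:ℝ) ≤ (N:ℝ) := by exact_mod_cast hN
  have hsn : Real.pi * h / 2 = Real.pi / n := by
    rw [hh, hnR]; field_simp
  have hspos : 0 < s := by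
    rw [hs, hsn]
    apply Real.sin_pos_of_pos_of_lt_pi
    · have : (0:ℝ) < n := by rw [hnR]; linarith
      positivity
    · rw [hnR, div_lt_iff₀ (by linarith : (0:ℝ) < 2*(N:ℝ))]
      nlinarith [Real.pi_pos]
  have hhpos : 0 < h := by rw [hh]; positivity
  rw [window _ hpv2, window _ hpd]
  set Sv : ℝ := ∑ j ∈ Finset.Ico (0:ℤ) n, (v j)^2 with hSv
  set Sd : ℝ := ∑ j ∈ Finset.Ico (0:ℤ) n, (v j - v (j-1))^2 with hSd
  have hSt : ∑ j ∈ Finset.Ico (0:ℤ) n, ((v j - v (j-1))/h)^2 = Sd / h^2 := by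
    rw [hSd, Finset.sum_div]
    exact Finset.sum_congr rfl fun j _ => div_pow _ _ _
  rw [hSt]
  have hspec : 4 * s^2 * Sv ≤ Sd := by rw [hs, hsn]; exact spec
  have hkey : h * Sv ≤ (h/(2*s))^2 * (h * (Sd/h^2)) := by
    rw [show (h/(2*s))^2 * (h * (Sd/h^2)) = (h/(4*s^2)) * Sd by
      field_simp; ring]
    rw [show h * Sv = (h/(4*s^2)) * (4*s^2*Sv) by field_simp]
    apply mul_le_mul_of_nonneg_left hspec (by positivity)
  calc Real.sqrt (h * Sv) ≤ Real.sqrt ((h/(2*s))^2 * (h * (Sd/h^2))) := Real.sqrt_le_sqrt hkey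
  _ = (h/(2*s)) * Real.sqrt (h * (Sd/h^2)) := by
      rw [Real.sqrt_mul (sq_nonneg _), Real.sqrt_sq (by positivity)]
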